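/- Let (s_n), (c_n) be sequences of nonnegative reals and (a_n) ⊆ [0,1] with s_{n+1} ≤ (1 − a_n)s_n + c_n for all n. Suppose L ∈ ℕ* bounds (s_n), ∑ c_n converges with Cauchy modulus χ, and ∑ a_n diverges with rate of divergence θ (i.e., ∑_{i=0}^{θ(n)} a_i ≥ n for all n). Then lim s_n = 0 with rate of convergence Σ(k) = θ(χ(2k+1) + 1 + ⌈ln(2L(k+1))⌉) + 1. -/

import Mathlib

theorem stmt_12 (s c : ℕ → ℝ) (hs : ∀ n, 0 ≤ s n) (hc : ∀ n, 0 ≤ c n)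
    (a : ℕ → ℝ) (ha : ∀ n, a n ∈ Set.Icc (0:ℝ) 1)
    (hrec : ∀ n, s (n + 1) ≤ (1 - a n) * s n + c n)
    (L : ℕ) (hL : 1 ≤ L) (hLb : ∀ n, s n ≤ L)
    (hcsum : Summable c)
    (χ : ℕ → ℕ)
    (hχ : ∀ k n, χ k ≤ n → ∀ l : ℕ, 1 ≤ l →
      ∑ i ∈ Finset.Icc (n + 1) (n + l), c i ≤ 1 / (k + 1))
    (θ : ℕ → ℕ)
    (hθ : ∀ n : ℕ, (n : ℝ) ≤ ∑ i ∈ Finset.range (θ n + 1), a i) :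
    ∀ k n, θ (χ (2 * k + 1) + 1 + ⌈Real.log (2 * L * (k + 1))⌉₊) + 1 ≤ n →
      s n ≤ 1 / (k + 1) := by
  intro k n hn
  set N : ℕ := χ (2 * k + 1) + 1 with hN
  set M : ℕ := ⌈Real.log (2 * L * (k + 1))⌉₊ with hM
  set m : ℕ := N + M with hm
  -- key unrolling
  have key : ∀ p, N ≤ p →
      s p ≤ (∏ i ∈ Finset.Ico N p, (1 - a i)) * s N + ∑ i ∈ Finset.Ico N p, c i := by
    intro p hp
    induction p, hp using Nat.le_induction with
    | base => simp
    | succ p hp ih =>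
      have h1 : (0:ℝ) ≤ 1 - a p := by have := (ha p).2; linarith
      have h2 : 1 - a p ≤ 1 := by have := (ha p).1; linarith
      have hsum0 : 0 ≤ ∑ i ∈ Finset.Ico N p, c i := Finset.sum_nonneg fun i _ => hc i
      calc s (p + 1) ≤ (1 - a p) * s p + c p := hrec p
        _ ≤ (1 - a p) * ((∏ i ∈ Finset.Ico N p, (1 - a i)) * s N + ∑ i ∈ Finset.Ico N p, c i) + c p := by
            have := mul_le_mul_of_nonneg_left ih h1; linarith
        _ ≤ (∏ i ∈ Finset.Ico N (p+1), (1 - a i)) * s N + ∑ i ∈ Finset.Ico N (p+1), c i := by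
            rw [Finset.prod_Ico_succ_top hp, Finset.sum_Ico_succ_top hp]
            have h3 : (1 - a p) * ∑ i ∈ Finset.Ico N p, c i ≤ ∑ i ∈ Finset.Ico N p, c i := by
              nlinarith [mul_nonneg (ha p).1 hsum0]
            have hexpand : (1 - a p) * ((∏ i ∈ Finset.Ico N p, (1 - a i)) * s N + ∑ i ∈ Finset.Ico N p, c i)
                = ((∏ i ∈ Finset.Ico N p, (1 - a i)) * (1 - a p)) * s N
                  + (1 - a p) * ∑ i ∈ Finset.Ico N p, c i := by ring
            linarith
  -- bounds on indices
  have hθm : (m : ℝ) ≤ ∑ i ∈ Finset.range (θ m + 1), a i := hθ m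
  have hrangebd : ∀ q : ℕ, ∑ i ∈ Finset.range q, a i ≤ q := by
    intro q
    calc ∑ i ∈ Finset.range q, a i ≤ ∑ _i ∈ Finset.range q, (1:ℝ) :=
          Finset.sum_le_sum fun i _ => (ha i).2
      _ = q := by simp
  have hMpos : 1 ≤ M := by
    rw [hM]
    apply Nat.one_le_ceil_iff.mpr
    apply Real.log_pos
    have : (1:ℝ) ≤ L := by exact_mod_cast hL
    have hk : (1:ℝ) ≤ (k:ℝ) + 1 := by linarith [Nat.cast_nonneg (α:=ℝ) k]
    nlinarith
  have hmθ : m ≤ θ m + 1 := by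
    by_contra h
    push_neg at h
    have h1 : ((θ m + 1 : ℕ) : ℝ) < (m : ℝ) := by exact_mod_cast h
    have h2 := hrangebd (θ m + 1)
    linarith
  have hNn : N + 1 ≤ n := by omega
  -- product bound
  have hprod : ∏ i ∈ Finset.Ico N n, (1 - a i) ≤ Real.exp (-(M:ℝ)) := by
    have h1 : ∏ i ∈ Finset.Ico N n, (1 - a i) ≤ ∏ i ∈ Finset.Ico N n, Real.exp (-(a i)) := by
      apply Finset.prod_le_prod
      · intro i _; have := (ha i).2; linarith
      · intro i _
        have := Real.add_one_le_exp (-(a i)); linarith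
    have h2 : ∏ i ∈ Finset.Ico N n, Real.exp (-(a i)) = Real.exp (-(∑ i ∈ Finset.Ico N n, a i)) := by
      rw [← Real.exp_sum]; simp
    have h3 : (M:ℝ) ≤ ∑ i ∈ Finset.Ico N n, a i := by
      have hsub : ∑ i ∈ Finset.Ico N (θ m + 1), a i
          = ∑ i ∈ Finset.range (θ m + 1), a i - ∑ i ∈ Finset.range N, a i := by
        rw [Finset.sum_Ico_eq_sub _ (by omega)]
      have hmono : ∑ i ∈ Finset.Ico N (θ m + 1), a i ≤ ∑ i ∈ Finset.Ico N n, a i := by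
        apply Finset.sum_le_sum_of_subset_of_nonneg
        · apply Finset.Ico_subset_Ico le_rfl; omega
        · intro i _ _; exact (ha i).1
      have hN' := hrangebd N
      have : (N:ℝ) + M ≤ ∑ i ∈ Finset.range (θ m + 1), a i := by
        have : ((m:ℕ):ℝ) = (N:ℝ) + M := by rw [hm]; push_cast; ring
        linarith [hθm, this.symm.le]
      linarith [hsub ▸ hmono]
    calc ∏ i ∈ Finset.Ico N n, (1 - a i) ≤ Real.exp (-(∑ i ∈ Finset.Ico N n, a i)) := h2 ▸ h1
      _ ≤ Real.exp (-(M:ℝ)) := Real.exp_le_exp.mpr (by linarith)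
  -- exp bound
  have hLpos : (0:ℝ) < 2 * L * (k + 1) := by
    have : (1:ℝ) ≤ L := by exact_mod_cast hL
    positivity
  have hexp : Real.exp (-(M:ℝ)) ≤ 1 / (2 * L * (k + 1)) := by
    have h1 : Real.log (2 * L * (k + 1)) ≤ (M:ℝ) := Nat.le_ceil _
    calc Real.exp (-(M:ℝ)) ≤ Real.exp (-(Real.log (2 * L * (k + 1)))) :=
          Real.exp_le_exp.mpr (neg_le_neg h1)
      _ = (Real.exp (Real.log (2 * (L:ℝ) * ((k:ℝ) + 1))))⁻¹ := Real.exp_neg _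
      _ = (2 * (L:ℝ) * ((k:ℝ) + 1))⁻¹ := by rw [Real.exp_log hLpos]
      _ = 1 / (2 * (L:ℝ) * ((k:ℝ) + 1)) := (one_div _).symm
  -- c sum bound
  have hcbd : ∑ i ∈ Finset.Ico N n, c i ≤ 1 / (2 * k + 1 + 1) := by
    have hl : 1 ≤ n - 1 - χ (2 * k + 1) := by omega
    have heq : Finset.Ico N n = Finset.Icc (χ (2 * k + 1) + 1) (χ (2 * k + 1) + (n - 1 - χ (2 * k + 1))) := by
      ext i; simp only [Finset.mem_Ico, Finset.mem_Icc, hN]; omega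
    have := hχ (2 * k + 1) (χ (2 * k + 1)) le_rfl (n - 1 - χ (2 * k + 1)) hl
    rw [heq]
    convert this using 2
    push_cast; ring
  -- combine
  have hkey := key n (by omega)
  have hprod_nonneg : 0 ≤ ∏ i ∈ Finset.Ico N n, (1 - a i) :=
    Finset.prod_nonneg fun i _ => by have := (ha i).2; linarith
  have hsN : s N ≤ L := hLb N
  have hfin : (∏ i ∈ Finset.Ico N n, (1 - a i)) * s N ≤ 1 / (2 * (k + 1)) := by
    have h1 : (∏ i ∈ Finset.Ico N n, (1 - a i)) * s N ≤ (1 / (2 * L * (k + 1))) * L := by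
      apply mul_le_mul (le_trans hprod hexp) hsN (hs N)
      positivity
    have hL1 : (1:ℝ) ≤ L := by exact_mod_cast hL
    have : (1 / (2 * L * (k + 1))) * (L:ℝ) = 1 / (2 * (k + 1)) := by
      field_simp
    linarith [this ▸ h1]
  have : (1:ℝ) / (2 * k + 1 + 1) = 1 / (2 * (k + 1)) := by ring_nf
  have hk1 : (0:ℝ) < (k:ℝ) + 1 := by positivity
  calc s n ≤ _ := hkey
    _ ≤ 1 / (2 * (k + 1)) + 1 / (2 * (k + 1)) := by linarith [this ▸ hcbd]
    _ = 1 / (k + 1) := by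
        rw [← add_div]
        rw [show ((1:ℝ) + 1) = 2 by norm_num]
        rw [mul_comm (2:ℝ) ((k:ℝ)+1), ← div_div]
        rw [div_right_comm]
        norm_num
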